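/- For every square matrix C : Matrix (Fin n) (Fin n) ℝ, the set {trace(Q · C) : Q ∈ O(n), i.e. Q a real n × n matrix with Qᵀ·Q = 1} has greatest element ‖C‖_* (the nuclear norm of C): trace(Q·C) ≤ ‖C‖_* for every orthogonal Q, and equality is attained by some orthogonal Q. -/

import Mathlib

open Matrix

/-- The spectral norm (largest singular value) of a real matrix: the `L2` operator norm
of the associated Euclidean linear map. -/
noncomputable def matrixSpectralNorm {m n : ℕ} (A : Matrix (Fin m) (Fin n) ℝ) : ℝ :=
  ‖LinearMap.toContinuousLinearMap (Matrix.toEuclideanLin A)‖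

/-- The positive semidefinite square root of a positive semidefinite matrix (the definition
of `Matrix.PosSemidef.sqrt` in the older Mathlib, which has since been removed). -/
noncomputable def Matrix.PosSemidef.oldSqrt {n : Type*} [Fintype n] [DecidableEq n]
    {A : Matrix n n ℝ} (hA : A.PosSemidef) : Matrix n n ℝ :=
  hA.1.eigenvectorUnitary.1 * diagonal ((↑) ∘ (hA.1.eigenvalues · |>.sqrt))
    * (star hA.1.eigenvectorUnitary : Matrix n n ℝ)

/-- The nuclear norm (sum of singular values) of a real matrix: the trace of the
positive-semidefinite square root of `Aᴴ * A` (over `ℝ`, `Aᴴ = Aᵀ`). -/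
noncomputable def nuclearNorm {m n : ℕ} (A : Matrix (Fin m) (Fin n) ℝ) : ℝ :=
  (Matrix.PosSemidef.oldSqrt (Matrix.posSemidef_conjTranspose_mul_self A)).trace

namespace NuclearAux

variable {n : ℕ}


lemma oldSqrt_posSemidef {A : Matrix (Fin n) (Fin n) ℝ} (hA : A.PosSemidef) :
    hA.oldSqrt.PosSemidef := by
  unfold Matrix.PosSemidef.oldSqrt
  rw [Matrix.star_eq_conjTranspose]
  exact (Matrix.PosSemidef.diagonal (fun i => Real.sqrt_nonneg _)).mul_mul_conjTranspose_same _

lemma oldSqrt_mul_self {A : Matrix (Fin n) (Fin n) ℝ} (hA : A.PosSemidef) :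
    hA.oldSqrt * hA.oldSqrt = A := by
  unfold Matrix.PosSemidef.oldSqrt
  set U : Matrix (Fin n) (Fin n) ℝ := (hA.1.eigenvectorUnitary : Matrix (Fin n) (Fin n) ℝ)
  set V : Matrix (Fin n) (Fin n) ℝ := star U
  set D := diagonal ((↑) ∘ (hA.1.eigenvalues · |>.sqrt) : Fin n → ℝ)
  have h1 : V * U = 1 := Unitary.coe_star_mul_self _
  have : U * D * V * (U * D * V) = U * (D * D) * V := by
    rw [show U * D * V * (U * D * V) = U * D * (V * U) * D * V by simp only [mul_assoc], h1, mul_one]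
    simp only [mul_assoc]
  rw [this, diagonal_mul_diagonal]
  conv_rhs => rw [hA.1.spectral_theorem, Unitary.conjStarAlgAut_apply]
  congr 2
  refine congrArg diagonal (funext fun i => ?_)
  simp [Real.mul_self_sqrt (hA.eigenvalues_nonneg i)]

lemma dot_mulVec_mulVec (A B : Matrix (Fin n) (Fin n) ℝ) (x y : Fin n → ℝ) :
    (A *ᵥ x) ⬝ᵥ (B *ᵥ y) = x ⬝ᵥ ((Aᵀ * B) *ᵥ y) := by
  rw [← Matrix.vecMul_transpose, Matrix.dotProduct_mulVec, Matrix.vecMul_vecMul,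
    ← Matrix.dotProduct_mulVec]

lemma inner_euclidean (x y : EuclideanSpace ℝ (Fin n)) :
    (inner ℝ x y : ℝ) = (WithLp.equiv 2 _ x) ⬝ᵥ (WithLp.equiv 2 _ y) := by
  simp [PiLp.inner_apply, RCLike.inner_apply, dotProduct, mul_comm]

lemma inner_toEuclideanLin (A B : Matrix (Fin n) (Fin n) ℝ) (x y : EuclideanSpace ℝ (Fin n)) :
    (inner ℝ (Matrix.toEuclideanLin A x) (Matrix.toEuclideanLin B y) : ℝ)
      = (WithLp.equiv 2 _ x) ⬝ᵥ ((Aᵀ * B) *ᵥ (WithLp.equiv 2 _ y)) := by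
  rw [inner_euclidean]
  exact dot_mulVec_mulVec A B _ _

lemma exists_polar (C : Matrix (Fin n) (Fin n) ℝ) :
    ∃ Q : Matrix (Fin n) (Fin n) ℝ, Qᵀ * Q = 1 ∧
      Q * (Matrix.posSemidef_conjTranspose_mul_self C).oldSqrt = C := by
  classical
  set hP := Matrix.posSemidef_conjTranspose_mul_self C with hPdef
  set S := hP.oldSqrt with hSdef
  have hS : S.PosSemidef := oldSqrt_posSemidef hP
  have hST : Sᵀ = S := by
    have := hS.1
    rwa [Matrix.IsHermitian, Matrix.conjTranspose_eq_transpose_of_trivial] at this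
  have hSS : Sᵀ * S = Cᵀ * C := by
    rw [hST, oldSqrt_mul_self hP, Matrix.conjTranspose_eq_transpose_of_trivial]
  set f := Matrix.toEuclideanLin S with hfdef
  set g := Matrix.toEuclideanLin C with hgdef
  have hinner : ∀ x : EuclideanSpace ℝ (Fin n), (inner ℝ (g x) (g x) : ℝ) = inner ℝ (f x) (f x) := by
    intro x
    rw [hfdef, hgdef, inner_toEuclideanLin, inner_toEuclideanLin, hSS]
  have hnorm : ∀ x, ‖g x‖ = ‖f x‖ := by
    intro x
    rw [← Real.sqrt_sq (norm_nonneg (g x)), ← Real.sqrt_sq (norm_nonneg (f x)),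
      ← real_inner_self_eq_norm_sq, ← real_inner_self_eq_norm_sq, hinner]
  have hker : LinearMap.ker f = LinearMap.ker g := by
    ext x
    simp only [LinearMap.mem_ker]
    constructor <;> intro hx
    · rw [← norm_eq_zero, hnorm, hx, norm_zero]
    · rw [← norm_eq_zero, ← hnorm, hx, norm_zero]
  set h : LinearMap.range f →ₗ[ℝ] EuclideanSpace ℝ (Fin n) :=
    ((LinearMap.ker f).liftQ g (le_of_eq hker)).comp f.quotKerEquivRange.symm.toLinearMap
      with hhdef
  have hkey : ∀ x : EuclideanSpace ℝ (Fin n),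
      h ⟨f x, LinearMap.mem_range_self f x⟩ = g x := by
    intro x
    rw [hhdef]
    simp only [LinearMap.comp_apply, LinearEquiv.coe_toLinearMap]
    rw [LinearMap.quotKerEquivRange_symm_apply_image, Submodule.mkQ_apply,
      Submodule.liftQ_apply]
  have hnm : ∀ v : LinearMap.range f, ‖h v‖ = ‖v‖ := by
    rintro ⟨v, x, rfl⟩
    rw [hkey x, hnorm]
    rfl
  set L : LinearMap.range f →ₗᵢ[ℝ] EuclideanSpace ℝ (Fin n) := ⟨h, hnm⟩ with hLdef
  set Lext := L.extend with hLextdef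
  set Q : Matrix (Fin n) (Fin n) ℝ := Matrix.toEuclideanLin.symm Lext.toLinearMap with hQdef
  have hQE : Matrix.toEuclideanLin Q = Lext.toLinearMap := by
    rw [hQdef]; exact LinearEquiv.apply_symm_apply _ _
  refine ⟨Q, ?_, ?_⟩
  · -- orthogonality
    have hpres : ∀ x y : EuclideanSpace ℝ (Fin n),
        (inner ℝ (Matrix.toEuclideanLin Q x) (Matrix.toEuclideanLin Q y) : ℝ) = inner ℝ x y := by
      intro x y
      rw [hQE]
      exact Lext.inner_map_map x y
    ext i j
    have := hpres ((WithLp.equiv 2 _).symm (Pi.single i 1)) ((WithLp.equiv 2 _).symm (Pi.single j 1))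
    rw [inner_toEuclideanLin, inner_euclidean] at this
    simp only [Equiv.apply_symm_apply] at this
    rw [Matrix.mulVec_single] at this
    simp only [mul_one, dotProduct_single, single_dotProduct, one_mul, mul_one,
      MulOpposite.op_one, one_smul, Matrix.col_apply] at this
    rw [this]
    simp [Matrix.one_apply, Pi.single_apply, eq_comm]
  · -- Q * S = C
    apply Matrix.toEuclideanLin.injective
    refine LinearMap.ext fun x => ?_
    have hstep : Matrix.toEuclideanLin (Q * S) x = Matrix.toEuclideanLin Q (f x) := by
      rw [hfdef]
      simp only [Matrix.toEuclideanLin_apply, Equiv.apply_symm_apply, Matrix.mulVec_mulVec]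
    rw [hstep, hQE]
    have : f x = ((⟨f x, LinearMap.mem_range_self f x⟩ : LinearMap.range f) :
        EuclideanSpace ℝ (Fin n)) := rfl
    rw [LinearIsometry.coe_toLinearMap, this, hLextdef, L.extend_apply, hLdef]
    exact hkey x



lemma trace_orth_mul_psd_le {S : Matrix (Fin n) (Fin n) ℝ} (hS : S.PosSemidef)
    {R : Matrix (Fin n) (Fin n) ℝ} (hR : Rᵀ * R = 1) : (R * S).trace ≤ S.trace := by
  classical
  have hH : S.IsHermitian := hS.1
  set W : Matrix (Fin n) (Fin n) ℝ := (hH.eigenvectorUnitary : Matrix (Fin n) (Fin n) ℝ)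
    with hWdef
  have hW1 : Wᵀ * W = 1 := by
    have := hH.eigenvectorUnitary.2
    rw [Matrix.mem_unitaryGroup_iff'] at this
    rwa [Matrix.star_eq_conjTranspose, Matrix.conjTranspose_eq_transpose_of_trivial] at this
  have hW2 : W * Wᵀ = 1 := mul_eq_one_comm.mp hW1
  set d : Fin n → ℝ := hH.eigenvalues with hddef
  have hd : ∀ i, 0 ≤ d i := hS.eigenvalues_nonneg
  have hspec : S = W * Matrix.diagonal d * Wᵀ := by
    have := hH.spectral_theorem
    rw [Unitary.conjStarAlgAut_apply] at this
    rwa [Matrix.star_eq_conjTranspose, Matrix.conjTranspose_eq_transpose_of_trivial,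
      show (RCLike.ofReal ∘ hH.eigenvalues : Fin n → ℝ) = d from rfl] at this
  set M : Matrix (Fin n) (Fin n) ℝ := Wᵀ * R * W with hMdef
  have hM : Mᵀ * M = 1 := by
    have h1 : Mᵀ * M = Wᵀ * (Rᵀ * ((W * Wᵀ) * (R * W))) := by
      rw [hMdef]
      simp only [Matrix.transpose_mul, Matrix.transpose_transpose, mul_assoc]
    rw [h1, hW2, one_mul, ← mul_assoc, ← mul_assoc, mul_assoc Wᵀ, hR, mul_one, hW1]
  have hMdiag : ∀ i, M i i ≤ 1 := by
    intro i
    have hcol : ∑ k, M k i * M k i = 1 := by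
      have : (Mᵀ * M) i i = (1 : Matrix (Fin n) (Fin n) ℝ) i i := by rw [hM]
      simpa [Matrix.mul_apply, Matrix.one_apply] using this
    have hle : M i i * M i i ≤ 1 := by
      rw [← hcol]
      exact Finset.single_le_sum (fun k _ => mul_self_nonneg (M k i)) (Finset.mem_univ i)
    nlinarith [hle]
  have htr1 : (R * S).trace = (M * Matrix.diagonal d).trace := by
    rw [hspec]
    rw [show R * (W * Matrix.diagonal d * Wᵀ) = (R * W * Matrix.diagonal d) * Wᵀ by
      simp only [mul_assoc]]
    rw [Matrix.trace_mul_comm]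
    congr 1
    rw [hMdef]
    simp only [mul_assoc]
  have htr2 : S.trace = (Matrix.diagonal d).trace := by
    rw [hspec, Matrix.trace_mul_comm, ← mul_assoc, hW1, one_mul]
  rw [htr1, htr2, Matrix.trace, Matrix.trace]
  apply Finset.sum_le_sum
  intro i _
  simp only [Matrix.diag_apply, Matrix.mul_diagonal, Matrix.diagonal_apply_eq]
  calc M i i * d i ≤ 1 * d i := mul_le_mul_of_nonneg_right (hMdiag i) (hd i)
    _ = d i := one_mul _

end NuclearAux

/-- Trace maximization over the orthogonal group: for every square real matrix `C`,
`‖C‖_*` is the greatest element of `{trace (Q * C) : Qᵀ * Q = 1}`. -/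
theorem nuclearNorm_eq_max_trace_orthogonal {n : ℕ} (C : Matrix (Fin n) (Fin n) ℝ) :
    (∀ Q : Matrix (Fin n) (Fin n) ℝ, Qᵀ * Q = 1 → (Q * C).trace ≤ nuclearNorm C) ∧
    (∃ Q : Matrix (Fin n) (Fin n) ℝ, Qᵀ * Q = 1 ∧ (Q * C).trace = nuclearNorm C) := by
  obtain ⟨Q₀, hQ₀, hpolar⟩ := NuclearAux.exists_polar C
  have hSpsd : (Matrix.posSemidef_conjTranspose_mul_self C).oldSqrt.PosSemidef :=
    NuclearAux.oldSqrt_posSemidef (Matrix.posSemidef_conjTranspose_mul_self C)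
  constructor
  · intro Q hQ
    have hRQ : (Q * Q₀)ᵀ * (Q * Q₀) = 1 := by
      rw [Matrix.transpose_mul]
      calc Q₀ᵀ * Qᵀ * (Q * Q₀) = Q₀ᵀ * (Qᵀ * Q) * Q₀ := by simp only [mul_assoc]
        _ = 1 := by rw [hQ, mul_one, hQ₀]
    have e : Q * C = Q * Q₀ * (Matrix.posSemidef_conjTranspose_mul_self C).oldSqrt := by
      rw [mul_assoc, hpolar]
    rw [nuclearNorm, e]
    exact NuclearAux.trace_orth_mul_psd_le hSpsd hRQ
  · refine ⟨Q₀ᵀ, ?_, ?_⟩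
    · rw [Matrix.transpose_transpose]
      exact mul_eq_one_comm.mp hQ₀
    · have e2 : Q₀ᵀ * C = (Matrix.posSemidef_conjTranspose_mul_self C).oldSqrt := by
        conv_lhs => rw [← hpolar, ← mul_assoc, hQ₀, one_mul]
      rw [e2, nuclearNorm]
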